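/- Let V ⊆ U be models of set theory, E and F filters on ω in V, f : ω → ω a function in V witnessing F ≤_RK E, and x ∈ P(ω) ∩ U a Mathias like real for E over V. Then f[x] is a Mathias like real for F over V. (Combinatorial form: if x ⊆* E for all E ∈ E and [x]^{<ω} meets every E^{<ω}-positive set from a given family closed under the pullback operation, then f[x] ⊆* F for all F ∈ F and [f[x]]^{<ω} meets every F^{<ω}-positive set in the family.) -/

import Mathlib

/-- A set `X ⊆ [ω]^{<ω}` is `G^{<ω}`-positive. -/
def FinPos (G : Filter ℕ) (X : Set (Finset ℕ)) : Prop :=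
  ∀ A ∈ G, ∃ a ∈ X, (↑a : Set ℕ) ⊆ A

/-- `x` is a Mathias like real for the filter `G`: (1) `x ⊆* A` for every
`A ∈ G`, and (2) `[x]^{<ω}` meets every `G^{<ω}`-positive set. -/
def MathiasLike (G : Filter ℕ) (x : Set ℕ) : Prop :=
  (∀ A ∈ G, (x \ A).Finite) ∧
    ∀ H : Set (Finset ℕ), FinPos G H → ∃ a ∈ H, (↑a : Set ℕ) ⊆ x

/-- If `f` witnesses `F ≤_RK E` and `x` is Mathias like for `E`, then `f[x]`
is Mathias like for `F`. -/
theorem stmt5 (E F : Filter ℕ) [E.NeBot] [F.NeBot]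
    (hE : E ≤ Filter.cofinite) (hF : F ≤ Filter.cofinite)
    (f : ℕ → ℕ) (hf : ∀ A : Set ℕ, A ∈ F ↔ f ⁻¹' A ∈ E)
    (x : Set ℕ) (hx : MathiasLike E x) :
    MathiasLike F (f '' x) := by
  obtain ⟨hx1, hx2⟩ := hx
  constructor
  · intro A hA
    have h1 : (x \ f ⁻¹' A).Finite := hx1 _ ((hf A).mp hA)
    refine ((h1.image f)).subset ?_
    rintro y ⟨⟨n, hn, rfl⟩, hy⟩
    exact ⟨n, ⟨hn, hy⟩, rfl⟩
  · intro H hH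
    set H' : Set (Finset ℕ) := {b | ∃ a ∈ H, (↑a : Set ℕ) ⊆ f '' ↑b} with hH'
    have hpos : FinPos E H' := by
      intro A hA
      have hfA : f '' A ∈ F := by
        rw [hf]
        exact Filter.mem_of_superset hA (Set.subset_preimage_image f A)
      obtain ⟨a, haH, haA⟩ := hH _ hfA
      have hg : ∀ n : a, ∃ m, m ∈ A ∧ f m = n := by
        rintro ⟨n, hn⟩
        obtain ⟨m, hm, hfm⟩ := haA hn
        exact ⟨m, hm, hfm⟩
      choose g hgA hgf using hg
      refine ⟨a.attach.image g, ⟨a, haH, ?_⟩, ?_⟩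
      · intro n hn
        refine ⟨g ⟨n, hn⟩, ?_, hgf ⟨n, hn⟩⟩
        simp only [Finset.coe_image, Set.mem_image]
        exact ⟨⟨n, hn⟩, by simp, rfl⟩
      · intro m hm
        simp only [Finset.coe_image, Set.mem_image, Finset.mem_coe,
          Finset.mem_attach] at hm
        obtain ⟨n, -, rfl⟩ := hm
        exact hgA n
    obtain ⟨b, ⟨a, haH, hab⟩, hbx⟩ := hx2 H' hpos
    exact ⟨a, haH, hab.trans (Set.image_mono (f := f) hbx)⟩
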